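/- Let q ≥ 1 and m ≥ 1. Let p : ℝ^q → ℂ be continuous, positively homogeneous of degree m (p(t • ξ) = tᵐ · p(ξ) for every real t ≥ 0 and every ξ ∈ ℝ^q), and elliptic (p(ξ) ≠ 0 for every ξ ≠ 0). Then there exists λ > 0 such that every linear map A : ℝ^q → ℝ^q satisfying p(A ξ) = p(ξ) for all ξ ∈ ℝ^q satisfies ‖A v‖ ≥ λ ‖v‖ for all v ∈ ℝ^q (Euclidean norm); in particular every such A is a linear automorphism of ℝ^q. -/

import Mathlib

/-- Uniform lower bound: every linear map preserving a continuous, positively homogeneous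
(of degree `m`), elliptic symbol `p` on Euclidean `ℝ^q` satisfies `‖A v‖ ≥ λ ‖v‖` for a
uniform `λ > 0`; in particular every such map is a linear automorphism. -/
theorem symbol_preserving_maps_uniformly_bounded_below
    {q m : ℕ} (hq : 1 ≤ q) (hm : 1 ≤ m)
    (p : EuclideanSpace ℝ (Fin q) → ℂ)
    (hp_cont : Continuous p)
    (hp_hom : ∀ t : ℝ, 0 ≤ t → ∀ ξ : EuclideanSpace ℝ (Fin q),
      p (t • ξ) = (t : ℂ) ^ m * p ξ)
    (hp_ell : ∀ ξ : EuclideanSpace ℝ (Fin q), ξ ≠ 0 → p ξ ≠ 0) :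
    ∃ lam : ℝ, 0 < lam ∧
      ∀ A : EuclideanSpace ℝ (Fin q) →ₗ[ℝ] EuclideanSpace ℝ (Fin q),
        (∀ ξ, p (A ξ) = p ξ) →
          (∀ v, lam * ‖v‖ ≤ ‖A v‖) ∧ Function.Bijective A := by
  -- the unit sphere is compact and nonempty
  have hS : IsCompact (Metric.sphere (0 : EuclideanSpace ℝ (Fin q)) 1) := isCompact_sphere 0 1
  have hne : (Metric.sphere (0 : EuclideanSpace ℝ (Fin q)) 1).Nonempty := by
    refine ⟨EuclideanSpace.single ⟨0, hq⟩ (1 : ℝ), ?_⟩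
    simp [EuclideanSpace.norm_single]
  have hcont : ContinuousOn (fun x : EuclideanSpace ℝ (Fin q) => ‖p x‖) (Metric.sphere 0 1) :=
    (hp_cont.norm).continuousOn
  obtain ⟨xc, hxc, hxcmin⟩ := hS.exists_isMinOn hne hcont
  obtain ⟨xC, hxC, hxCmax⟩ := hS.exists_isMaxOn hne hcont
  set c : ℝ := ‖p xc‖ with hc_def
  set C : ℝ := ‖p xC‖ with hC_def
  have hxc_ne : xc ≠ 0 := by
    intro h; rw [h] at hxc; simp at hxc
  have hc_pos : 0 < c := norm_pos_iff.mpr (hp_ell xc hxc_ne)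
  have hC_pos : 0 < C := lt_of_lt_of_le hc_pos (hxCmax hxc)
  have hcC_pos : 0 < c / C := div_pos hc_pos hC_pos
  refine ⟨min (c / C) 1, lt_min hcC_pos one_pos, ?_⟩
  intro A hA
  -- key estimate for unit vectors
  have key : ∀ u : EuclideanSpace ℝ (Fin q), ‖u‖ = 1 → min (c / C) 1 ≤ ‖A u‖ := by
    intro u hu
    have huS : u ∈ Metric.sphere (0 : EuclideanSpace ℝ (Fin q)) 1 := by simp [hu]
    have hpu : c ≤ ‖p u‖ := hxcmin huS
    have hw_ne : A u ≠ 0 := by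
      intro h
      have h0 : p (0 : EuclideanSpace ℝ (Fin q)) = 0 := by
        have := hp_hom 0 le_rfl 0
        simpa [zero_pow (by omega : m ≠ 0)] using this
      have hpz : p u = 0 := by rw [← hA u, h, h0]
      rw [hpz] at hpu; simp at hpu
      exact absurd hpu (not_le.mpr hc_pos)
    set r : ℝ := ‖A u‖ with hr_def
    have hr_pos : 0 < r := norm_pos_iff.mpr hw_ne
    set w : EuclideanSpace ℝ (Fin q) := r⁻¹ • A u with hw_def
    have hwS : w ∈ Metric.sphere (0 : EuclideanSpace ℝ (Fin q)) 1 := by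
      simp only [mem_sphere_iff_norm, sub_zero, hw_def, norm_smul, norm_inv,
        norm_norm, Real.norm_eq_abs, abs_of_pos hr_pos]
      field_simp
      exact hr_def.symm
    have hAu_eq : A u = r • w := by
      rw [hw_def, smul_smul, mul_inv_cancel₀ (ne_of_gt hr_pos), one_smul]
    have hpAu : p (A u) = (r : ℂ) ^ m * p w := by
      rw [hAu_eq]; exact hp_hom r (le_of_lt hr_pos) w
    have hnorm : ‖p u‖ = r ^ m * ‖p w‖ := by
      rw [← hA u, hpAu, norm_mul, norm_pow, Complex.norm_real,
        Real.norm_eq_abs, abs_of_pos hr_pos]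
    have hpwC : ‖p w‖ ≤ C := hxCmax hwS
    have hrm : c / C ≤ r ^ m := by
      rw [div_le_iff₀ hC_pos]
      calc c ≤ ‖p u‖ := hpu
        _ = r ^ m * ‖p w‖ := hnorm
        _ ≤ r ^ m * C := by
            exact mul_le_mul_of_nonneg_left hpwC (pow_nonneg (le_of_lt hr_pos) m)
    rcases le_or_gt 1 r with h1 | h1
    · exact le_trans (min_le_right _ _) h1
    · have hle : r ^ m ≤ r := by
        calc r ^ m ≤ r ^ 1 := pow_le_pow_of_le_one (le_of_lt hr_pos) (le_of_lt h1) hm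
          _ = r := pow_one r
      exact le_trans (min_le_left _ _) (le_trans hrm hle)
  have hbound : ∀ v : EuclideanSpace ℝ (Fin q), min (c / C) 1 * ‖v‖ ≤ ‖A v‖ := by
    intro v
    rcases eq_or_ne v 0 with rfl | hv
    · simp
    · have hv_pos : 0 < ‖v‖ := norm_pos_iff.mpr hv
      set u : EuclideanSpace ℝ (Fin q) := ‖v‖⁻¹ • v with hu_def
      have hu_norm : ‖u‖ = 1 := by
        rw [hu_def, norm_smul, norm_inv, norm_norm, inv_mul_cancel₀ (ne_of_gt hv_pos)]
      have hv_eq : v = ‖v‖ • u := by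
        rw [hu_def, smul_smul, mul_inv_cancel₀ (ne_of_gt hv_pos), one_smul]
      have hAv : A v = ‖v‖ • A u := by rw [← map_smul, ← hv_eq]
      rw [hAv, norm_smul, norm_norm, mul_comm]
      exact mul_le_mul_of_nonneg_left (key u hu_norm) (le_of_lt hv_pos)
  refine ⟨hbound, ?_⟩
  have hinj : Function.Injective A := by
    rw [← LinearMap.ker_eq_bot, LinearMap.ker_eq_bot']
    intro v hv
    have hb := hbound v
    rw [hv, norm_zero] at hb
    have hnn : ‖v‖ ≤ 0 := by
      by_contra h
      push_neg at h
      nlinarith [lt_min hcC_pos (one_pos : (0:ℝ) < 1)]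
    exact norm_le_zero_iff.mp hnn
  exact ⟨hinj, (LinearMap.injective_iff_surjective).mp hinj⟩
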